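/- arXiv:1305.5089 — 5 statements merged into one kernel-verified Lean document; each statement's English description precedes it below -/
import Mathlib

section
/- Let L be a 3-dimensional ω-Lie algebra over a field k of characteristic zero whose commutator subalgebra L' = [L,L] is 1-dimensional. Then ω is identically zero, i.e., L is a trivial ω-Lie algebra (a Lie algebra). -/
/-- A 3-dimensional ω-Lie algebra over a field of characteristic zero whose commutator
subalgebra `L' = [L,L]` (the span of all brackets) is 1-dimensional has `ω ≡ 0`,
i.e. it is a trivial ω-Lie algebra (a Lie algebra). -/
theorem omega_lie_rank_one_trivial
    {k L : Type*} [Field k] [CharZero k] [AddCommGroup L] [Module k L]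
    [FiniteDimensional k L]
    (bracket : L →ₗ[k] L →ₗ[k] L) (ω : L →ₗ[k] L →ₗ[k] k)
    (hanti : ∀ a b : L, bracket a b = - bracket b a)
    (hskew : ∀ a b : L, ω a b = - ω b a)
    (hjac : ∀ a b c : L,
      bracket (bracket a b) c + bracket (bracket b c) a + bracket (bracket c a) b
        = ω a b • c + ω b c • a + ω c a • b)
    (hdim : Module.finrank k L = 3)
    (hderived : Module.finrank k
      ↥(Submodule.span k (Set.range fun p : L × L => bracket p.1 p.2)) = 1) :
    ∀ a b : L, ω a b = 0 := by
  classical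
  set S := Submodule.span k (Set.range fun p : L × L => bracket p.1 p.2) with hS
  have hprin : S.IsPrincipal := S.finrank_le_one_iff_isPrincipal.mp (le_of_eq hderived)
  obtain ⟨e, he⟩ := hprin.principal
  -- every bracket is a multiple of e
  have hbr : ∀ a b : L, ∃ c : k, bracket a b = c • e := by
    intro a b
    have hmem : bracket a b ∈ S := Submodule.subset_span ⟨(a, b), rfl⟩
    rw [he, Submodule.mem_span_singleton] at hmem
    obtain ⟨c, hc⟩ := hmem
    exact ⟨c, hc.symm⟩
  -- bracket e e = 0
  have hee : bracket e e = 0 := by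
    have h := hanti e e
    have h2 : (2 : k) • bracket e e = 0 := by
      rw [two_smul]
      nth_rewrite 2 [h]
      abel
    rcases smul_eq_zero.mp h2 with h | h
    · exact absurd h two_ne_zero
    · exact h
  -- key identity
  have key : ∀ x y : L, ω x y • e + ω y e • x + ω e x • y = 0 := by
    intro x y
    obtain ⟨α, hα⟩ := hbr x y
    obtain ⟨β, hβ⟩ := hbr y e
    obtain ⟨γ, hγ⟩ := hbr e x
    have hey : bracket e y = -(β • e) := by rw [hanti e y, hβ]
    have h := hjac x y e
    rw [hα, hβ, hγ, map_smul, map_smul, map_smul, LinearMap.smul_apply,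
      LinearMap.smul_apply, LinearMap.smul_apply, hee, hγ, hey, smul_zero,
      smul_smul, smul_neg, smul_smul, mul_comm γ β] at h
    rw [← h]
    abel
  intro a b
  by_contra hab
  -- e is in the span of a and b
  have he_mem : e ∈ Submodule.span k {a, b} := by
    have hk := key a b
    have h1 : ω a b • e = (-(ω b e)) • a + (-(ω e a)) • b := by
      rw [neg_smul, neg_smul]
      linear_combination (norm := module) hk
    have h2 : e = ((ω a b)⁻¹ * (-(ω b e))) • a + ((ω a b)⁻¹ * (-(ω e a))) • b := by
      rw [mul_smul, mul_smul, ← smul_add, ← h1, inv_smul_smul₀ hab]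
    exact Submodule.mem_span_pair.mpr ⟨_, _, h2.symm⟩
  -- every z is in the span of a and b
  have hz : ∀ z : L, z ∈ Submodule.span k {a, b} := by
    intro z
    obtain ⟨c1, h1⟩ := hbr (bracket a b) z
    obtain ⟨c2, h2⟩ := hbr (bracket b z) a
    obtain ⟨c3, h3⟩ := hbr (bracket z a) b
    have h := hjac a b z
    rw [h1, h2, h3] at h
    have h4 : ω a b • z = (c1 + c2 + c3) • e - ω b z • a - ω z a • b := by
      rw [add_smul, add_smul]
      linear_combination (norm := module) h.symm
    have hmem : ω a b • z ∈ Submodule.span k {a, b} := by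
      rw [h4]
      refine Submodule.sub_mem _ (Submodule.sub_mem _ (Submodule.smul_mem _ _ he_mem)
        (Submodule.smul_mem _ _ ?_)) (Submodule.smul_mem _ _ ?_)
      · exact Submodule.subset_span (Set.mem_insert a {b})
      · exact Submodule.subset_span (Set.mem_insert_of_mem a rfl)
    exact (Submodule.smul_mem_iff _ hab).mp hmem
  -- contradiction with finrank = 3
  have htop : (⊤ : Submodule k L) = Submodule.span k {a, b} := by
    exact le_antisymm (fun z _ => hz z) le_top
  have hfin : Module.finrank k L ≤ 2 := by
    have := finrank_span_le_card (R := k) ({a, b} : Set L)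
    rw [← htop, finrank_top] at this
    refine this.trans ?_
    simp [Set.toFinset_insert]
    exact Finset.card_insert_le _ _ |>.trans (by simp)
  omega
end

section
/- Let L be a 3-dimensional complex ω-Lie algebra with ω not identically zero. Then the commutator subalgebra L' = [L,L] has dimension 2 or 3. -/
/-- Let `L` be a 3-dimensional complex ω-Lie algebra with `ω` not identically zero.
Then the commutator subalgebra `L' = [L,L]` (the span of all brackets) has
dimension 2 or 3. -/
theorem omega_lie_nontrivial_derived_dim
    {L : Type*} [AddCommGroup L] [Module ℂ L] [FiniteDimensional ℂ L]
    (bracket : L →ₗ[ℂ] L →ₗ[ℂ] L) (ω : L →ₗ[ℂ] L →ₗ[ℂ] ℂ)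
    (hanti : ∀ a b : L, bracket a b = - bracket b a)
    (hskew : ∀ a b : L, ω a b = - ω b a)
    (hjac : ∀ a b c : L,
      bracket (bracket a b) c + bracket (bracket b c) a + bracket (bracket c a) b
        = ω a b • c + ω b c • a + ω c a • b)
    (hdim : Module.finrank ℂ L = 3)
    (hω : ¬ ∀ a b : L, ω a b = 0) :
    Module.finrank ℂ
        ↥(Submodule.span ℂ (Set.range fun p : L × L => bracket p.1 p.2)) = 2 ∨
      Module.finrank ℂ
        ↥(Submodule.span ℂ (Set.range fun p : L × L => bracket p.1 p.2)) = 3 := by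
  classical
  push_neg at hω
  obtain ⟨a, b, hab⟩ := hω
  set S : Submodule ℂ L :=
    Submodule.span ℂ (Set.range fun p : L × L => bracket p.1 p.2) with hSdef
  have hbr : ∀ x y : L, bracket x y ∈ S := fun x y =>
    Submodule.subset_span ⟨(x, y), rfl⟩
  have hRHS : ∀ x y z : L, ω x y • z + ω y z • x + ω z x • y ∈ S := by
    intro x y z
    rw [← hjac x y z]
    exact add_mem (add_mem (hbr _ _) (hbr _ _)) (hbr _ _)
  -- ω x x = 0
  have hzero : ∀ x : L, ω x x = 0 := by
    intro x
    have := hskew x x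
    linear_combination this / 2
  have hbrzero : ∀ x : L, bracket x x = 0 := by
    intro x
    have h2 : (2:ℂ) • bracket x x = 0 := by
      rw [two_smul]; nth_rewrite 2 [hanti x x]; abel
    exact (smul_eq_zero.mp h2).resolve_left two_ne_zero
  -- independence of a, b
  have hind : ∀ α β : ℂ, α • a + β • b = 0 → α = 0 ∧ β = 0 := by
    intro α β h
    have h1 : ω (α • a + β • b) b = 0 := by rw [h]; simp
    have h2 : ω a (α • a + β • b) = 0 := by rw [h]; simp
    simp [map_smul, hzero] at h1 h2
    constructor
    · rcases h1 with h1 | h1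
      · exact h1
      · exact absurd h1 hab
    · rcases h2 with h2 | h2
      · exact h2
      · exact absurd h2 hab
  -- main claim: 2 ≤ finrank S
  have hmain : 2 ≤ Module.finrank ℂ S := by
    by_contra hlt
    push_neg at hlt
    have hle1 : Module.finrank ℂ S ≤ 1 := by omega
    rw [Submodule.finrank_le_one_iff_isPrincipal] at hle1
    obtain ⟨v, hv⟩ := hle1
    have hSv : S = Submodule.span ℂ {v} := hv
    have hmemv : ∀ x y : L, ∃ c : ℂ, bracket x y = c • v := by
      intro x y
      have := hbr x y
      rw [hSv, Submodule.mem_span_singleton] at this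
      obtain ⟨c, hc⟩ := this
      exact ⟨c, hc.symm⟩
    by_cases hvab : v ∈ Submodule.span ℂ ({a, b} : Set L)
    · -- then S ⊆ span {a,b}; get c outside span{a,b}
      have hSsub : S ≤ Submodule.span ℂ ({a, b} : Set L) := by
        rw [hSv]
        rwa [Submodule.span_le, Set.singleton_subset_iff]
      have hcard : Module.finrank ℂ (Submodule.span ℂ ({a, b} : Set L)) < Module.finrank ℂ L := by
        have h2 : Module.finrank ℂ (Submodule.span ℂ ({a, b} : Set L)) ≤ 2 := by
          have h := finrank_span_finset_le_card (R := ℂ) ({a, b} : Finset L)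
          have hc : ({a, b} : Finset L).card ≤ 2 :=
            (Finset.card_insert_le a {b}).trans (by simp)
          have hcoe : (({a, b} : Finset L) : Set L) = ({a, b} : Set L) := by simp
          rw [Set.finrank, hcoe] at h
          omega
        omega
      obtain ⟨c, hc⟩ := Submodule.exists_of_finrank_lt _ hcard
      have hcv := hc 1 one_ne_zero
      rw [one_smul] at hcv
      -- Jacobi (a,b,c) : RHS ∈ S ⊆ span{a,b}
      have := hSsub (hRHS a b c)
      have hc' : ω a b • c ∈ Submodule.span ℂ ({a, b} : Set L) := by
        have hmem2 : ω b c • a + ω c a • b ∈ Submodule.span ℂ ({a, b} : Set L) := by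
          apply add_mem <;> exact Submodule.smul_mem _ _
            (Submodule.subset_span (by simp))
        have : ω a b • c = (ω a b • c + ω b c • a + ω c a • b) - (ω b c • a + ω c a • b) := by
          abel
        rw [this]
        exact sub_mem ‹_› hmem2
      have : c ∈ Submodule.span ℂ ({a, b} : Set L) := by
        have := Submodule.smul_mem _ (ω a b)⁻¹ hc'
        rwa [inv_smul_smul₀ hab] at this
      exact hcv this
    · -- v ∉ span{a,b}
      -- From Jacobi (a,b,v): ω b v • a + ω v a • b ∈ span v
      have hmemS : ω a b • v + ω b v • a + ω v a • b ∈ S := hRHS a b v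
      rw [hSv, Submodule.mem_span_singleton] at hmemS
      obtain ⟨t, ht⟩ := hmemS
      have hw : ω b v • a + ω v a • b = (t - ω a b) • v := by
        rw [sub_smul, ht]; abel
      have htab : t - ω a b = 0 := by
        by_contra h0
        apply hvab
        have : v = (t - ω a b)⁻¹ • (ω b v • a + ω v a • b) := by
          rw [hw, inv_smul_smul₀ h0]
        rw [this]
        exact Submodule.smul_mem _ _ (add_mem
          (Submodule.smul_mem _ _ (Submodule.subset_span (by simp)))
          (Submodule.smul_mem _ _ (Submodule.subset_span (by simp))))
      rw [htab, zero_smul] at hw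
      obtain ⟨hbv, hva⟩ := hind _ _ hw
      -- brackets with v
      obtain ⟨q, hq⟩ := hmemv a v
      obtain ⟨r, hr⟩ := hmemv b v
      obtain ⟨s, hs⟩ := hmemv b a
      -- Jacobi (a, v, b)
      have hj := hjac a v b
      have hvb : bracket v b = (-r) • v := by
        rw [hanti v b, hr, neg_smul]
      have hva' : bracket v a = (-q) • v := by
        rw [hanti v a, hq, neg_smul]
      have hLHS : bracket (bracket a v) b + bracket (bracket v b) a + bracket (bracket b a) v
          = 0 := by
        rw [hq, hvb, hs, map_smul, map_smul, map_smul, LinearMap.smul_apply,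
          LinearMap.smul_apply, LinearMap.smul_apply, hvb, hva', hbrzero]
        module
      rw [hLHS] at hj
      have hav : ω a v = 0 := by rw [hskew a v, hva, neg_zero]
      have hvb' : ω v b = 0 := by rw [hskew v b, hbv, neg_zero]
      have hba : ω b a = -(ω a b) := by rw [hskew b a]
      rw [hav, hvb', hba, zero_smul, zero_smul, neg_smul] at hj
      have hv0 : v = 0 := by
        have : ω a b • v = 0 := by
          have := hj.symm
          simpa using this
        exact (smul_eq_zero.mp this).resolve_left hab
      exact hvab (hv0 ▸ Submodule.zero_mem _)
  have hle : Module.finrank ℂ S ≤ 3 := hdim ▸ Submodule.finrank_le S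
  omega
end

section
/- For every α ∈ ℂ, on the 3-dimensional complex vector space with basis {x,y,z}, the anticommutative bilinear bracket determined by [x,y] = x, [x,z] = x+y, [y,z] = z+αx, together with the skew-symmetric bilinear form ω determined by ω(x,y) = 0, ω(x,z) = 0, ω(y,z) = −1, satisfies the ω-Jacobi identity; this structure A_α is a nontrivial (non-Lie) ω-Lie algebra. -/
/-- The bracket of `A_α` on `ℂ³`: the bilinear extension of `[x,y] = x`,
`[x,z] = x + y`, `[y,z] = z + α x` on the standard basis `x = e₀, y = e₁, z = e₂`. -/
def brA (α : ℂ) (u v : Fin 3 → ℂ) : Fin 3 → ℂ :=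
  ![(u 0 * v 1 - u 1 * v 0) + (u 0 * v 2 - u 2 * v 0) + α * (u 1 * v 2 - u 2 * v 1),
    u 0 * v 2 - u 2 * v 0, u 1 * v 2 - u 2 * v 1]

/-- The form of `A_α`: the bilinear extension of `ω(x,y) = ω(x,z) = 0`, `ω(y,z) = -1`. -/
def omA (u v : Fin 3 → ℂ) : ℂ := -(u 1 * v 2 - u 2 * v 1)

/-- For every `α ∈ ℂ`, on `ℂ³` with basis `x = e₀, y = e₁, z = e₂`, the anticommutative
bilinear bracket determined by `[x,y] = x`, `[x,z] = x + y`, `[y,z] = z + α x` and the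
skew-symmetric bilinear form determined by `ω(x,y) = ω(x,z) = 0`, `ω(y,z) = -1`
satisfy the ω-Jacobi identity, and `ω` is not identically zero: `A_α` is a nontrivial
(non-Lie) ω-Lie algebra. -/
theorem A_alpha_is_nontrivial_omega_lie (α : ℂ) :
    (∀ (a b : ℂ) (u v w : Fin 3 → ℂ),
        brA α (a • u + b • v) w = a • brA α u w + b • brA α v w) ∧
    (∀ (a b : ℂ) (u v w : Fin 3 → ℂ),
        brA α w (a • u + b • v) = a • brA α w u + b • brA α w v) ∧
    (∀ (a b : ℂ) (u v w : Fin 3 → ℂ),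
        omA (a • u + b • v) w = a * omA u w + b * omA v w) ∧
    (∀ (a b : ℂ) (u v w : Fin 3 → ℂ),
        omA w (a • u + b • v) = a * omA w u + b * omA w v) ∧
    brA α ![1,0,0] ![0,1,0] = ![1,0,0] ∧
    brA α ![1,0,0] ![0,0,1] = ![1,0,0] + ![0,1,0] ∧
    brA α ![0,1,0] ![0,0,1] = ![0,0,1] + α • ![1,0,0] ∧
    omA ![1,0,0] ![0,1,0] = 0 ∧
    omA ![1,0,0] ![0,0,1] = 0 ∧
    omA ![0,1,0] ![0,0,1] = -1 ∧
    (∀ u v : Fin 3 → ℂ, brA α u v = - brA α v u) ∧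
    (∀ u v : Fin 3 → ℂ, omA u v = - omA v u) ∧
    (∀ u v w : Fin 3 → ℂ,
        brA α (brA α u v) w + brA α (brA α v w) u + brA α (brA α w u) v
          = omA u v • w + omA v w • u + omA w u • v) ∧
    ¬ (∀ u v : Fin 3 → ℂ, omA u v = 0) := by
  refine ⟨?_, ?_, ?_, ?_, ?_, ?_, ?_, ?_, ?_, ?_, ?_, ?_, ?_, ?_⟩
  · intro a b u v w; funext i; fin_cases i <;> simp [brA] <;> ring
  · intro a b u v w; funext i; fin_cases i <;> simp [brA] <;> ring
  · intro a b u v w; simp [omA]; ring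
  · intro a b u v w; simp [omA]; ring
  · funext i; fin_cases i <;> simp [brA]
  · funext i; fin_cases i <;> simp [brA]
  · funext i; fin_cases i <;> simp [brA]
  · simp [omA]
  · simp [omA]
  · simp [omA]
  · intro u v; funext i; fin_cases i <;> simp [brA] <;> ring
  · intro u v; simp [omA]; ring
  · intro u v w; funext i; fin_cases i <;> simp [brA, omA] <;> ring
  · intro h; have := h ![0,1,0] ![0,0,1]; simp [omA] at this
end

section
/- Let L be a 3-dimensional complex ω-Lie algebra with [L,L] = L. Then for every nonzero x ∈ L, the adjoint map ad_x : L → L, u ↦ [x,u], has rank 2; equivalently, the kernel of ad_x equals the line ℂ·x. -/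
/-- Let `L` be a 3-dimensional complex ω-Lie algebra with `[L,L] = L`. Then for every
nonzero `x ∈ L`, the adjoint map `ad_x : u ↦ [x,u]` has rank 2; equivalently, its
kernel is the line `ℂ • x`. -/
theorem omega_lie_perfect_ad_rank_two
    {L : Type*} [AddCommGroup L] [Module ℂ L] [FiniteDimensional ℂ L]
    (bracket : L →ₗ[ℂ] L →ₗ[ℂ] L) (ω : L →ₗ[ℂ] L →ₗ[ℂ] ℂ)
    (hanti : ∀ a b : L, bracket a b = - bracket b a)
    (hskew : ∀ a b : L, ω a b = - ω b a)
    (hjac : ∀ a b c : L,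
      bracket (bracket a b) c + bracket (bracket b c) a + bracket (bracket c a) b
        = ω a b • c + ω b c • a + ω c a • b)
    (hdim : Module.finrank ℂ L = 3)
    (hderived : Submodule.span ℂ (Set.range fun p : L × L => bracket p.1 p.2) = ⊤) :
    ∀ x : L, x ≠ 0 →
      Module.finrank ℂ ↥(LinearMap.range (bracket x)) = 2 ∧
      LinearMap.ker (bracket x) = Submodule.span ℂ {x} := by
  classical
  have hself : ∀ a : L, bracket a a = 0 := by
    intro a
    have h := hanti a a
    have h2 : bracket a a + bracket a a = 0 := by nth_rewrite 2 [h]; abel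
    have h3 : (2 : ℂ) • bracket a a = 0 := by rw [two_smul]; exact h2
    rcases smul_eq_zero.mp h3 with h | h
    · norm_num at h
    · exact h
  intro x hx
  -- kernel is contained in the line through x
  have hker_le : ∀ y : L, bracket x y = 0 → y ∈ Submodule.span ℂ ({x} : Set L) := by
    intro y hy
    by_contra hyn
    -- find z outside span {x, y}
    have hfspan : Module.finrank ℂ (Submodule.span ℂ ({x, y} : Set L)) ≤ 2 := by
      have := finrank_span_le_card (R := ℂ) ({x, y} : Set L)
      refine this.trans ?_
      classical
      calc ({x, y} : Set L).toFinset.card ≤ ({x, y} : Finset L).card := by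
            simp
        _ ≤ 2 := Finset.card_insert_le x {y} |>.trans (by simp)
    have hne : Submodule.span ℂ ({x, y} : Set L) ≠ ⊤ := by
      intro h
      rw [h, finrank_top, hdim] at hfspan
      omega
    obtain ⟨z, hz⟩ : ∃ z : L, z ∉ Submodule.span ℂ ({x, y} : Set L) := by
      by_contra h
      push_neg at h
      exact hne (Submodule.eq_top_iff'.mpr h)
    -- x, y, z are linearly independent
    have hyx : y ∉ Submodule.span ℂ ({x} : Set L) := hyn
    have hli : LinearIndependent ℂ ![z, y, x] := by
      rw [show (![z, y, x]) = Fin.cons z ![y, x] from rfl, linearIndependent_fin_cons]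
      constructor
      · rw [show (![y, x]) = Fin.cons y ![x] from rfl, linearIndependent_fin_cons]
        constructor
        · exact linearIndependent_unique_iff.mpr (by simpa using hx)
        · have hr : Set.range ![x] = ({x} : Set L) := by
            ext w; simp [Fin.exists_fin_one]
          rw [hr]; exact hyx
      · have hr : Set.range ![y, x] = ({x, y} : Set L) := by
          ext w
          simp [Fin.exists_fin_two]
        rw [hr]; exact hz
    -- they form a basis, so span {z, y, x} = ⊤
    have hcard : Fintype.card (Fin 3) = Module.finrank ℂ L := by simp [hdim]
    let b := basisOfLinearIndependentOfCardEqFinrank hli hcard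
    have hspan : Submodule.span ℂ ({z, y, x} : Set L) = ⊤ := by
      have := b.span_eq
      rw [show ⇑b = ![z, y, x] from coe_basisOfLinearIndependentOfCardEqFinrank hli hcard] at this
      convert this using 2
      ext w
      simp [Fin.exists_fin_succ, Fin.exists_fin_two]
      tauto
      ext w
      simp [Fin.exists_fin_succ, Fin.exists_fin_two]
      tauto
    -- bracket of y with x vanishes too
    have hyx0 : bracket y x = 0 := by rw [hanti, hy, neg_zero]
    have hxy0 : bracket x y = 0 := hy
    -- all brackets lie in the span of two vectors
    set T : Submodule ℂ L := Submodule.span ℂ ({bracket x z, bracket y z} : Set L) with hT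
    have hgen : ∀ a ∈ ({z, y, x} : Set L), ∀ b ∈ ({z, y, x} : Set L), bracket a b ∈ T := by
      have hxz : bracket x z ∈ T := Submodule.subset_span (by simp)
      have hyz : bracket y z ∈ T := Submodule.subset_span (by simp)
      have hzx : bracket z x ∈ T := by rw [hanti]; exact neg_mem hxz
      have hzy : bracket z y ∈ T := by rw [hanti]; exact neg_mem hyz
      rintro a (rfl | rfl | rfl) b (rfl | rfl | rfl) <;>
        first
          | (rw [hself]; exact zero_mem T)
          | (rw [hxy0]; exact zero_mem T)
          | (rw [hyx0]; exact zero_mem T)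
          | assumption
    have hall : ∀ a b : L, bracket a b ∈ T := by
      intro a b
      have ha : a ∈ Submodule.span ℂ ({z, y, x} : Set L) := by rw [hspan]; trivial
      have hb : b ∈ Submodule.span ℂ ({z, y, x} : Set L) := by rw [hspan]; trivial
      refine Submodule.span_induction₂ (p := fun a b _ _ => bracket a b ∈ T)
        (fun a b ha hb => hgen a ha b hb) ?_ ?_ ?_ ?_ ?_ ?_ ha hb
      · intro y hy; simp
      · intro x hx; simp
      · intro u v w _ _ _ h1 h2; rw [map_add, LinearMap.add_apply]; exact add_mem h1 h2
      · intro u v w _ _ _ h1 h2; rw [map_add]; exact add_mem h1 h2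
      · intro r u v _ _ h; rw [map_smul, LinearMap.smul_apply]; exact Submodule.smul_mem T r h
      · intro r u v _ _ h; rw [map_smul]; exact Submodule.smul_mem T r h
    -- hence [L, L] has dimension at most 2, contradicting perfectness
    have hTtop : T = ⊤ := by
      rw [eq_top_iff, ← hderived]
      refine Submodule.span_le.mpr ?_
      rintro w ⟨⟨a, c⟩, rfl⟩
      exact hall a c
    have hT2 : Module.finrank ℂ T ≤ 2 := by
      have := finrank_span_le_card (R := ℂ) ({bracket x z, bracket y z} : Set L)
      rw [← hT] at this
      refine this.trans ?_
      classical
      calc ({bracket x z, bracket y z} : Set L).toFinset.card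
            ≤ ({bracket x z, bracket y z} : Finset L).card := by simp
        _ ≤ 2 := Finset.card_insert_le _ _ |>.trans (by simp)
    rw [hTtop, finrank_top, hdim] at hT2
    omega
  -- conclude
  have hkernel : LinearMap.ker (bracket x) = Submodule.span ℂ ({x} : Set L) := by
    apply le_antisymm
    · intro y hy
      exact hker_le y (LinearMap.mem_ker.mp hy)
    · rw [Submodule.span_le, Set.singleton_subset_iff]
      exact LinearMap.mem_ker.mpr (hself x)
  refine ⟨?_, hkernel⟩
  have hrn := LinearMap.finrank_range_add_finrank_ker (bracket x)
  rw [hkernel, hdim] at hrn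
  have h1 : Module.finrank ℂ (Submodule.span ℂ ({x} : Set L)) = 1 :=
    finrank_span_singleton hx
  omega
end

section
/- There is no 3-dimensional complex ω-Lie algebra L with a basis {x,y,z} such that ω(x,v) = 0 for all v ∈ L, [x,y] = x, and [x,z] = z. -/
/-- There is no 3-dimensional complex ω-Lie algebra `L` with a basis `{x, y, z}` such that
`ω(x,v) = 0` for all `v ∈ L`, `[x,y] = x` and `[x,z] = z`. -/
theorem no_omega_lie_case_D
    {L : Type*} [AddCommGroup L] [Module ℂ L]
    (bracket : L →ₗ[ℂ] L →ₗ[ℂ] L) (ω : L →ₗ[ℂ] L →ₗ[ℂ] ℂ)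
    (hanti : ∀ a b : L, bracket a b = - bracket b a)
    (hskew : ∀ a b : L, ω a b = - ω b a)
    (hjac : ∀ a b c : L,
      bracket (bracket a b) c + bracket (bracket b c) a + bracket (bracket c a) b
        = ω a b • c + ω b c • a + ω c a • b)
    (b : Module.Basis (Fin 3) ℂ L) :
    ¬ ((∀ v : L, ω (b 0) v = 0) ∧
        bracket (b 0) (b 1) = b 0 ∧
        bracket (b 0) (b 2) = b 2) := by
  rintro ⟨hω, h1, h2⟩
  have hself : bracket (b 0) (b 0) = 0 := by
    have h := hanti (b 0) (b 0)
    have h2' : (2 : ℂ) • bracket (b 0) (b 0) = 0 := by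
      rw [two_smul]; nth_rewrite 2 [h]; abel
    have := smul_eq_zero.mp h2'
    simpa using this.resolve_left (by norm_num)
  have hzx : bracket (b 2) (b 0) = - b 2 := by rw [hanti, h2]
  have hωzx : ω (b 2) (b 0) = 0 := by rw [hskew, hω]; simp
  have hj := hjac (b 0) (b 1) (b 2)
  rw [h1, h2, hzx, hω, hωzx] at hj
  rw [map_neg, LinearMap.neg_apply, hanti (b 2) (b 1), neg_neg] at hj
  rw [hanti (bracket (b 1) (b 2)) (b 0)] at hj
  set r := b.repr (bracket (b 1) (b 2)) with hr
  have hw : bracket (b 1) (b 2) = r 0 • b 0 + r 1 • b 1 + r 2 • b 2 := by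
    have := b.sum_repr (bracket (b 1) (b 2))
    rw [Fin.sum_univ_three] at this
    exact this.symm
  rw [hw] at hj
  rw [map_add, map_add, map_smul, map_smul, map_smul, hself, h1, h2] at hj
  have h3 := congrArg (fun v => b.repr v 2) hj
  simp [Finsupp.single_apply, b.repr_self] at h3
end
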